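/- Let n ≥ 4 be an even integer and let Ωₙ ⊆ ℝ³ be the regular polygon state space with pure states ωₙ(i). Let F := (eₙ(i), u − eₙ(i)) and G := (eₙ(j), u − eₙ(j)) be ideal measurements on Ωₙ (for some 0 ≤ i, j ≤ n−1), and let M̃ = (m_{kl})_{k,l∈{0,1}} be any approximate joint measurement of (F, G), with marginals M̃^F and M̃^G. Then there exists ω ∈ Ωₙ such that D_∞(M̃^F, F) + D_∞(M̃^G, G) ≥ LE(ω^F) + LE(ω^G). -/

import Mathlib

open RealInnerProductSpace

variable {V : Type*} [NormedAddCommGroup V] [InnerProductSpace ℝ V] [FiniteDimensional ℝ V]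

/-- A state space: nonempty compact convex set whose affine hull misses `0` and has
dimension `dim V - 1` (so it spans `V`). -/
def IsStateSpace (Ω : Set V) : Prop :=
  Ω.Nonempty ∧ IsCompact Ω ∧ Convex ℝ Ω ∧ (0 : V) ∉ affineSpan ℝ Ω ∧
    Module.finrank ℝ (vectorSpan ℝ Ω) + 1 = Module.finrank ℝ V

/-- The group `GL(Ω)` of linear bijections preserving `Ω`. -/
def autGroup (Ω : Set V) : Set (V ≃ₗ[ℝ] V) := {T | T '' Ω = Ω}

/-- Transitivity of the action of `GL(Ω)` on the extreme points of `Ω`. -/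
def IsTransitive (Ω : Set V) : Prop :=
  ∀ ω₁ ∈ Set.extremePoints ℝ Ω, ∀ ω₂ ∈ Set.extremePoints ℝ Ω,
    ∃ T ∈ autGroup Ω, T ω₁ = ω₂

/-- The inner product of `V` is invariant under `GL(Ω)`. -/
def InvariantInner (Ω : Set V) : Prop :=
  ∀ T ∈ autGroup Ω, ∀ x y : V, ⟪T x, T y⟫ = ⟪x, y⟫

/-- The positive cone generated by `Ω`. -/
def posCone (Ω : Set V) : Set V := {x | ∃ l : ℝ, ∃ ω ∈ Ω, 0 ≤ l ∧ x = l • ω}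

/-- Self-duality of the positive cone with respect to the inner product of `V`. -/
def SelfDualCone (Ω : Set V) : Prop :=
  posCone Ω = {y | ∀ x ∈ posCone Ω, 0 ≤ ⟪x, y⟫}

/-- An effect on `Ω`. -/
def IsEffect (Ω : Set V) (e : V) : Prop := ∀ ω ∈ Ω, 0 ≤ ⟪e, ω⟫ ∧ ⟪e, ω⟫ ≤ 1

/-- A measurement with outcome set `A`: a family of nonzero effects summing to the
unit effect `ωM`. -/
def IsMeasurement (Ω : Set V) (ωM : V) {A : Type*} [Fintype A] (f : A → V) : Prop :=
  (∀ a, f a ≠ 0 ∧ IsEffect Ω (f a)) ∧ ∑ a, f a = ωM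

/-- An ideal measurement. -/
def IsIdeal (Ω : Set V) (ωM : V) {A : Type*} [Fintype A] (f : A → V) : Prop :=
  IsMeasurement Ω ωM f ∧
    ∃ c : ℝ, 0 < c ∧ (∀ ω ∈ Set.extremePoints ℝ Ω, ‖ω‖ = c) ∧
      ∀ a, ∃ S : Finset V, ↑S ⊆ Set.extremePoints ℝ Ω ∧
        (f a = (c ^ 2)⁻¹ • ∑ ω' ∈ S, ω' ∨ f a = ωM - (c ^ 2)⁻¹ • ∑ ω' ∈ S, ω')

/-- First marginal of a joint measurement. -/
def margF {A B : Type*} [Fintype B] (m : A × B → V) : A → V := fun a => ∑ b, m (a, b)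

/-- Second marginal of a joint measurement. -/
def margG {A B : Type*} [Fintype A] (m : A × B → V) : B → V := fun b => ∑ a, m (a, b)

open Classical in
/-- `∑_{a' : d(a',a) ≤ w/2} ⟪f a', ω⟫`. -/
noncomputable def ballSum {A : Type*} [Fintype A] [MetricSpace A]
    (f : A → V) (ω : V) (a : A) (w : ℝ) : ℝ :=
  ∑ a' ∈ Finset.univ.filter (fun x => dist x a ≤ w / 2), ⟪f a', ω⟫

/-- Overall width of the distribution of `f` on `ω` at confidence level `1 - ε`. -/
noncomputable def overallWidth {A : Type*} [Fintype A] [MetricSpace A]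
    (f : A → V) (ω : V) (ε : ℝ) : ℝ :=
  sInf {w : ℝ | 0 < w ∧ ∃ a : A, 1 - ε ≤ ballSum f ω a w}

/-- Error bar width of `ft` relative to `f`. -/
noncomputable def errorBarWidth (Ω : Set V) {A : Type*} [Fintype A] [MetricSpace A]
    (ft f : A → V) (ε : ℝ) : ℝ :=
  sInf {w : ℝ | 0 < w ∧ ∀ a : A, ∀ ω ∈ Ω, ⟪f a, ω⟫ = 1 → 1 - ε ≤ ballSum ft ω a w}

/-- Werner's measure `D_W(ft, f)`. -/
noncomputable def wernerD (Ω : Set V) {A : Type*} [Fintype A] [MetricSpace A]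
    (ft f : A → V) : ℝ :=
  sSup {d : ℝ | ∃ ω ∈ Ω, ∃ h : A → ℝ, (∀ a₁ a₂ : A, |h a₁ - h a₂| ≤ dist a₁ a₂) ∧
    d = |∑ a, h a * (⟪ft a, ω⟫ - ⟪f a, ω⟫)|}

/-- `l∞` distance `D_∞(ft, f)`. -/
noncomputable def dInfty (Ω : Set V) {A : Type*} (ft f : A → V) : ℝ :=
  sSup {d : ℝ | ∃ ω ∈ Ω, ∃ a : A, d = |⟪ft a, ω⟫ - ⟪f a, ω⟫|}

/-- Minimum localization error `LE(ω^F)`. -/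
noncomputable def locError {A : Type*} [Fintype A] [Nonempty A] (f : A → V) (ω : V) : ℝ :=
  1 - Finset.univ.sup' Finset.univ_nonempty (fun a => ⟪f a, ω⟫)

/-- `rₙ = (cos (π/n))^{-1/2}`. -/
noncomputable def rpoly (n : ℕ) : ℝ := Real.sqrt (1 / Real.cos (Real.pi / n))

/-- The pure states `ωₙ(i)` of the regular polygon theory. -/
noncomputable def polyState (n : ℕ) (i : ℕ) : EuclideanSpace ℝ (Fin 3) :=
  (WithLp.equiv 2 (Fin 3 → ℝ)).symm
    ![rpoly n * Real.cos (2 * Real.pi * (i : ℝ) / n),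
      rpoly n * Real.sin (2 * Real.pi * (i : ℝ) / n), 1]

/-- The extreme effects `eₙ(i)` of the regular polygon theory, for even `n`. -/
noncomputable def polyEffect (n : ℕ) (i : ℕ) : EuclideanSpace ℝ (Fin 3) :=
  (WithLp.equiv 2 (Fin 3 → ℝ)).symm
    ![rpoly n * Real.cos ((2 * (i : ℝ) - 1) * Real.pi / n) / 2,
      rpoly n * Real.sin ((2 * (i : ℝ) - 1) * Real.pi / n) / 2, 1 / 2]

/-- The regular polygon state space `Ωₙ`. -/
noncomputable def polyΩ (n : ℕ) : Set (EuclideanSpace ℝ (Fin 3)) :=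
  convexHull ℝ {ω | ∃ i < n, ω = polyState n i}

/-- The unit effect `u = (0, 0, 1)`. -/
noncomputable def unitEff : EuclideanSpace ℝ (Fin 3) :=
  (WithLp.equiv 2 (Fin 3 → ℝ)).symm ![0, 0, 1]

namespace PolyAux

noncomputable def v3 (a b c : ℝ) : EuclideanSpace ℝ (Fin 3) :=
  (WithLp.equiv 2 (Fin 3 → ℝ)).symm ![a, b, c]

lemma inner_v3 (a b c a' b' c' : ℝ) :
    ⟪v3 a b c, v3 a' b' c'⟫ = a * a' + b * b' + c * c' := by
  simp [v3, PiLp.inner_apply, Fin.sum_univ_three, WithLp.equiv_symm_apply, PiLp.toLp_apply]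
  ring


lemma v3_add (a b c a' b' c' : ℝ) : v3 a b c + v3 a' b' c' = v3 (a+a') (b+b') (c+c') := by
  ext k; fin_cases k <;> simp [v3, WithLp.equiv_symm_apply, PiLp.toLp_apply]

lemma v3_smul (r a b c : ℝ) : r • v3 a b c = v3 (r*a) (r*b) (r*c) := by
  ext k; fin_cases k <;> simp [v3, WithLp.equiv_symm_apply, PiLp.toLp_apply]

lemma v3_sub (a b c a' b' c' : ℝ) : v3 a b c - v3 a' b' c' = v3 (a-a') (b-b') (c-c') := by
  ext k; fin_cases k <;> simp [v3, WithLp.equiv_symm_apply, PiLp.toLp_apply]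

lemma v3_congr {a b c a' b' c' : ℝ} (h1 : a = a') (h2 : b = b') (h3 : c = c') :
    v3 a b c = v3 a' b' c' := by rw [h1, h2, h3]

noncomputable def zet (n : ℕ) : ℝ := Real.pi / n

noncomputable def st (n : ℕ) (t : ℝ) : EuclideanSpace ℝ (Fin 3) :=
  v3 (rpoly n * Real.cos (2 * t * zet n)) (rpoly n * Real.sin (2 * t * zet n)) 1

noncomputable def ef (n : ℕ) (t : ℝ) : EuclideanSpace ℝ (Fin 3) :=
  v3 (rpoly n * Real.cos ((2 * t - 1) * zet n) / 2)
    (rpoly n * Real.sin ((2 * t - 1) * zet n) / 2) (1 / 2)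

lemma unitEff_eq : unitEff = v3 0 0 1 := rfl

lemma polyState_eq (n : ℕ) (k : ℕ) : polyState n k = st n k := by
  have h1 : 2 * Real.pi * (k : ℝ) / n = 2 * (k : ℝ) * zet n := by
    unfold zet; ring
  rw [polyState, st, v3, h1]

lemma polyEffect_eq (n : ℕ) (k : ℕ) : polyEffect n k = ef n k := by
  have h1 : (2 * (k : ℝ) - 1) * Real.pi / n = (2 * (k : ℝ) - 1) * zet n := by
    unfold zet; ring
  rw [polyEffect, ef, v3, h1]

variable {n : ℕ}

lemma pi_div_n_mem (hn : 4 ≤ n) : zet n ∈ Set.Ioo (-(Real.pi/2)) (Real.pi/2) := by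
  have h4 : (4:ℝ) ≤ n := by exact_mod_cast hn
  have hpi := Real.pi_pos
  constructor
  · have : (0:ℝ) < Real.pi / n := by positivity
    unfold zet; linarith
  · unfold zet
    have : Real.pi / n ≤ Real.pi / 4 := by
      apply div_le_div_of_nonneg_left hpi.le (by linarith) h4
    linarith

lemma cos_zet_pos (hn : 4 ≤ n) : 0 < Real.cos (zet n) :=
  Real.cos_pos_of_mem_Ioo (pi_div_n_mem hn)

lemma rpoly_sq (hn : 4 ≤ n) : rpoly n ^ 2 = 1 / Real.cos (zet n) := by
  have hc := cos_zet_pos hn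
  rw [rpoly]
  rw [Real.sq_sqrt (by positivity : (0:ℝ) ≤ 1 / Real.cos (Real.pi / n))]
  rfl

lemma n_zet (hn : 4 ≤ n) : (n : ℝ) * zet n = Real.pi := by
  have : (n:ℝ) ≠ 0 := by positivity
  unfold zet; field_simp

lemma inner_ef_st (hn : 4 ≤ n) (s t : ℝ) :
    ⟪ef n s, st n t⟫ = 1/2 + Real.cos ((2*(s - t) - 1) * zet n) / (2 * Real.cos (zet n)) := by
  have hc := cos_zet_pos hn
  have hr := rpoly_sq hn
  rw [ef, st, inner_v3]
  have hcos : Real.cos ((2*s-1) * zet n) * Real.cos (2*t*zet n)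
      + Real.sin ((2*s-1) * zet n) * Real.sin (2*t*zet n)
      = Real.cos ((2*(s - t) - 1) * zet n) := by
    rw [← Real.cos_sub]
    congr 1
    ring
  have expand : rpoly n * Real.cos ((2*s-1)*zet n) / 2 * (rpoly n * Real.cos (2*t*zet n))
      + rpoly n * Real.sin ((2*s-1)*zet n) / 2 * (rpoly n * Real.sin (2*t*zet n))
      + 1/2 * 1
      = rpoly n ^ 2 * (Real.cos ((2*s-1) * zet n) * Real.cos (2*t*zet n)
          + Real.sin ((2*s-1) * zet n) * Real.sin (2*t*zet n)) / 2 + 1/2 := by ring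
  rw [expand, hcos, hr]
  field_simp
  ring

lemma inner_unit_st (t : ℝ) : ⟪unitEff, st n t⟫ = 1 := by
  rw [unitEff_eq, st, inner_v3]; ring

lemma inner_unit_unit : ⟪(unitEff : EuclideanSpace ℝ (Fin 3)), unitEff⟫ = 1 := by
  rw [unitEff_eq, inner_v3]; ring

lemma inner_ef_unit (s : ℝ) : ⟪ef n s, unitEff⟫ = 1/2 := by
  rw [unitEff_eq, ef, inner_v3]; ring

lemma st_antipode (hn : 4 ≤ n) (t : ℝ) :
    st n (t + (n:ℝ)/2) = (2:ℝ) • unitEff - st n t := by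
  have hz := n_zet hn
  have harg : 2 * (t + (n:ℝ)/2) * zet n = 2*t*zet n + Real.pi := by
    rw [← hz]; ring
  rw [st, st, unitEff_eq, v3_smul, v3_sub, harg]
  exact v3_congr (by rw [Real.cos_add_pi]; ring) (by rw [Real.sin_add_pi]; ring) (by ring)

lemma cos_sum_id (A B : ℝ) :
    Real.cos (A - B) + Real.cos (A + B) = 2 * Real.cos A * Real.cos B := by
  rw [Real.cos_sub, Real.cos_add]; ring

lemma sin_sum_id (A B : ℝ) :
    Real.sin (A - B) + Real.sin (A + B) = 2 * Real.sin A * Real.cos B := by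
  rw [Real.sin_sub, Real.sin_add]; ring

lemma st_mid (n : ℕ) (s t : ℝ) :
    (2:ℝ)⁻¹ • (st n s + st n t) - unitEff
      = Real.cos ((t - s) * zet n) • (st n ((s+t)/2) - unitEff) := by
  have hc : Real.cos (2*s*zet n) + Real.cos (2*t*zet n)
      = 2 * Real.cos ((s+t)*zet n) * Real.cos ((t-s)*zet n) := by
    have := cos_sum_id ((s+t)*zet n) ((t-s)*zet n)
    have e1 : (s+t)*zet n - (t-s)*zet n = 2*s*zet n := by ring
    have e2 : (s+t)*zet n + (t-s)*zet n = 2*t*zet n := by ring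
    rw [e1, e2] at this
    exact this
  have hs : Real.sin (2*s*zet n) + Real.sin (2*t*zet n)
      = 2 * Real.sin ((s+t)*zet n) * Real.cos ((t-s)*zet n) := by
    have := sin_sum_id ((s+t)*zet n) ((t-s)*zet n)
    have e1 : (s+t)*zet n - (t-s)*zet n = 2*s*zet n := by ring
    have e2 : (s+t)*zet n + (t-s)*zet n = 2*t*zet n := by ring
    rw [e1, e2] at this
    exact this
  have harg : 2*((s+t)/2)*zet n = (s+t)*zet n := by ring
  rw [st, st, st, unitEff_eq, harg, v3_add, v3_smul, v3_sub, v3_sub, v3_smul]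
  exact v3_congr (by linear_combination (2:ℝ)⁻¹ * rpoly n * hc)
    (by linear_combination (2:ℝ)⁻¹ * rpoly n * hs) (by ring)

lemma st_cast_mod (hn : 4 ≤ n) (k : ℕ) : st n k = st n ((k % n : ℕ) : ℝ) := by
  have hn0 : 0 < n := by omega
  have hmd : ((k % n : ℕ) : ℝ) + ((k / n : ℕ) : ℝ) * n = (k : ℝ) := by
    have : k % n + k / n * n = k := Nat.mod_add_div' k n
    exact_mod_cast congrArg (fun x : ℕ => (x : ℝ)) this
  have harg : 2 * (k:ℝ) * zet n
      = 2 * ((k % n : ℕ) : ℝ) * zet n + (((k / n : ℕ) : ℤ) : ℝ) * (2 * Real.pi) := by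
    rw [Int.cast_natCast, ← n_zet hn]
    linear_combination (2 * zet n) * hmd.symm
  rw [st, st, harg]
  exact v3_congr (by rw [Real.cos_add_int_mul_two_pi])
    (by rw [Real.sin_add_int_mul_two_pi]) rfl

lemma st_mem (hn : 4 ≤ n) (k : ℕ) : st n (k : ℝ) ∈ polyΩ n := by
  have hn0 : 0 < n := by omega
  rw [st_cast_mod hn k]
  apply subset_convexHull
  exact ⟨k % n, Nat.mod_lt _ hn0, (polyState_eq n (k % n)).symm⟩

lemma mem_half {x y : EuclideanSpace ℝ (Fin 3)} (hx : x ∈ polyΩ n) (hy : y ∈ polyΩ n) :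
    (2:ℝ)⁻¹ • (x + y) ∈ polyΩ n := by
  have h := (convex_convexHull ℝ {ω | ∃ i < n, ω = polyState n i}) hx hy
    (by norm_num : (0:ℝ) ≤ 2⁻¹) (by norm_num : (0:ℝ) ≤ 2⁻¹) (by norm_num)
  rw [polyΩ]
  convert h using 1
  rw [smul_add]

lemma half_cast (heven : Even n) : ((n / 2 : ℕ) : ℝ) = (n : ℝ) / 2 := by
  obtain ⟨w, hw⟩ := heven
  have h1 : n / 2 = w := by omega
  rw [h1]
  have : (n:ℝ) = 2 * w := by rw [hw]; push_cast; ring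
  rw [this]; ring

lemma st_nat_antipode (hn : 4 ≤ n) (heven : Even n) (t : ℕ) :
    st n ((t + n / 2 : ℕ) : ℝ) = (2:ℝ) • unitEff - st n t := by
  have h1 : ((t + n / 2 : ℕ) : ℝ) = (t : ℝ) + (n : ℝ)/2 := by
    push_cast [half_cast heven]; ring
  rw [h1, st_antipode hn]

lemma unit_mem (hn : 4 ≤ n) (heven : Even n) : unitEff ∈ polyΩ n := by
  have h := mem_half (st_mem hn 0) (st_mem hn (0 + n / 2))
  have h2 : st n ((0 + n / 2 : ℕ) : ℝ) = (2:ℝ) • unitEff - st n (0:ℕ) :=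
    st_nat_antipode hn heven 0
  rw [h2] at h
  convert h using 1
  have : st n ((0:ℕ):ℝ) + ((2:ℝ) • unitEff - st n ((0:ℕ):ℝ)) = (2:ℝ) • unitEff := by abel
  rw [this, smul_smul]
  norm_num

lemma hull_bound (v : EuclideanSpace ℝ (Fin 3)) (lo hi : ℝ)
    (h : ∀ k, k < n → lo ≤ ⟪v, st n k⟫ ∧ ⟪v, st n k⟫ ≤ hi) :
    ∀ ω ∈ polyΩ n, lo ≤ ⟪v, ω⟫ ∧ ⟪v, ω⟫ ≤ hi := by
  intro ω hω
  have hconv : Convex ℝ {x : EuclideanSpace ℝ (Fin 3) | lo ≤ ⟪v, x⟫ ∧ ⟪v, x⟫ ≤ hi} := by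
    intro x hx y hy a b ha hb hab
    have hax : ⟪v, a • x + b • y⟫ = a * ⟪v, x⟫ + b * ⟪v, y⟫ := by
      rw [inner_add_right, real_inner_smul_right, real_inner_smul_right]
    rw [Set.mem_setOf_eq] at hx hy
    have hlo : a * lo + b * lo = lo := by rw [← add_mul, hab, one_mul]
    have hhi : a * hi + b * hi = hi := by rw [← add_mul, hab, one_mul]
    constructor
    · show lo ≤ ⟪v, a • x + b • y⟫
      rw [hax]
      have t1 := mul_le_mul_of_nonneg_left hx.1 ha
      have t2 := mul_le_mul_of_nonneg_left hy.1 hb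
      linarith
    · show ⟪v, a • x + b • y⟫ ≤ hi
      rw [hax]
      have t1 := mul_le_mul_of_nonneg_left hx.2 ha
      have t2 := mul_le_mul_of_nonneg_left hy.2 hb
      linarith
  have hsub : {ω | ∃ i < n, ω = polyState n i} ⊆
      {x : EuclideanSpace ℝ (Fin 3) | lo ≤ ⟪v, x⟫ ∧ ⟪v, x⟫ ≤ hi} := by
    rintro x ⟨k, hk, rfl⟩
    rw [polyState_eq]
    exact h k hk
  exact convexHull_min hsub hconv hω

lemma pair_bound {e w w' : EuclideanSpace ℝ (Fin 3)}
    (hw0 : 0 ≤ ⟪e, w⟫) (hw'0 : 0 ≤ ⟪e, w'⟫)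
    (hsum : w + w' = (2:ℝ) • unitEff) (lam K : ℝ) (hK : |lam| ≤ K) :
    ⟪e, lam • (w - unitEff)⟫ ≤ K * ⟪e, unitEff⟫ := by
  have hu : ⟪e, w⟫ + ⟪e, w'⟫ = 2 * ⟪e, unitEff⟫ := by
    rw [← inner_add_right, hsum, real_inner_smul_right]
  rw [real_inner_smul_right, inner_sub_right]
  obtain ⟨hK1, hK2⟩ := abs_le.mp hK
  nlinarith [mul_nonneg (by linarith : (0:ℝ) ≤ K - lam) hw0,
    mul_nonneg (by linarith : (0:ℝ) ≤ K + lam) hw'0]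

lemma trig1 {z : ℝ} (hc : 0 ≤ Real.cos z) (D : ℝ) :
    2 * Real.cos z * |Real.cos (D * z)| ≤ |Real.cos ((D+1) * z)| + |Real.cos ((D-1) * z)| := by
  have key : Real.cos ((D-1) * z) + Real.cos ((D+1) * z)
      = 2 * Real.cos (D * z) * Real.cos z := by
    have := cos_sum_id (D * z) z
    have e1 : D * z - z = (D-1) * z := by ring
    have e2 : D * z + z = (D+1) * z := by ring
    rw [e1, e2] at this
    exact this
  calc 2 * Real.cos z * |Real.cos (D * z)|
      = |2 * Real.cos (D * z) * Real.cos z| := by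
        rw [abs_mul, abs_mul, abs_of_nonneg hc, abs_of_nonneg (by norm_num : (0:ℝ) ≤ 2)]
        ring
    _ = |Real.cos ((D-1) * z) + Real.cos ((D+1) * z)| := by rw [key]
    _ ≤ |Real.cos ((D-1) * z)| + |Real.cos ((D+1) * z)| := abs_add_le _ _
    _ = |Real.cos ((D+1) * z)| + |Real.cos ((D-1) * z)| := by ring

lemma decomp (hn : 4 ≤ n) (heven : Even n) (p q : ℕ) :
    ∃ (lam : ℝ) (wv wv' : EuclideanSpace ℝ (Fin 3)) (t : ℕ),
      wv ∈ polyΩ n ∧ wv' ∈ polyΩ n ∧ wv + wv' = (2:ℝ) • unitEff ∧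
      (2:ℝ)⁻¹ • (st n p + st n q) - unitEff = lam • (wv - unitEff) ∧
      2 * Real.cos (zet n) * |lam|
        ≤ |Real.cos ((2*((p:ℝ) - (t:ℝ)) - 1) * zet n)|
          + |Real.cos ((2*((q:ℝ) - (t:ℝ)) - 1) * zet n)| := by
  have hc := cos_zet_pos hn
  rcases Nat.even_or_odd (p + q) with he | ho
  · obtain ⟨t, ht⟩ := he
    have htR : (t:ℝ) = ((p:ℝ) + (q:ℝ))/2 := by
      have h0 : ((p + q : ℕ):ℝ) = ((t + t : ℕ):ℝ) := by rw [ht]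
      push_cast at h0; linarith
    refine ⟨Real.cos (((q:ℝ) - (p:ℝ)) * zet n), st n t, st n ((t + n/2 : ℕ) : ℝ), t,
      st_mem hn t, st_mem hn _, ?_, ?_, ?_⟩
    · rw [st_nat_antipode hn heven t]; abel
    · have hmid := st_mid n (p:ℝ) (q:ℝ)
      rw [show ((p:ℝ) + (q:ℝ))/2 = (t:ℝ) from htR.symm] at hmid
      exact hmid
    · have e1 : (2*((p:ℝ) - (t:ℝ)) - 1) * zet n
          = -(((((q:ℝ) - (p:ℝ))) + 1) * zet n) := by rw [htR]; ring
      have e2 : (2*((q:ℝ) - (t:ℝ)) - 1) * zet n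
          = ((((q:ℝ) - (p:ℝ))) - 1) * zet n := by rw [htR]; ring
      rw [e1, e2, Real.cos_neg]
      exact trig1 hc.le _
  · obtain ⟨t, ht⟩ := ho
    have htR : (t:ℝ) = ((p:ℝ) + (q:ℝ) - 1)/2 := by
      have h0 : ((p + q : ℕ):ℝ) = ((2*t + 1 : ℕ):ℝ) := by rw [ht]
      push_cast at h0; linarith
    have c1 : ((t+1 : ℕ):ℝ) = (t:ℝ) + 1 := by push_cast; ring
    have c2 : ((t + n/2 : ℕ):ℝ) = (t:ℝ) + (n:ℝ)/2 := by
      push_cast [half_cast heven]; ring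
    have c3 : ((t+1+(n/2) : ℕ):ℝ) = ((t:ℝ) + 1) + (n:ℝ)/2 := by
      push_cast [half_cast heven]; ring
    set wv : EuclideanSpace ℝ (Fin 3) := (2:ℝ)⁻¹ • (st n (t:ℝ) + st n ((t:ℝ)+1)) with hwv
    set wv' : EuclideanSpace ℝ (Fin 3) :=
      (2:ℝ)⁻¹ • (st n ((t:ℝ) + (n:ℝ)/2) + st n (((t:ℝ)+1) + (n:ℝ)/2)) with hwv'
    have hmem : wv ∈ polyΩ n := by
      have h2 := st_mem hn (t+1)
      rw [c1] at h2
      exact mem_half (st_mem hn t) h2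
    have hmem' : wv' ∈ polyΩ n := by
      have h2 := st_mem hn (t + n/2)
      have h3 := st_mem hn (t+1+(n/2))
      rw [c2] at h2
      rw [c3] at h3
      exact mem_half h2 h3
    have hsum : wv + wv' = (2:ℝ) • unitEff := by
      rw [hwv, hwv', st_antipode hn (t:ℝ), st_antipode hn ((t:ℝ)+1)]
      module
    have hE : wv - unitEff = Real.cos (zet n) • (st n ((t:ℝ) + 1/2) - unitEff) := by
      have := st_mid n (t:ℝ) ((t:ℝ)+1)
      rw [show ((t:ℝ)+1 - (t:ℝ)) * zet n = 1 * zet n by ring, one_mul,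
        show ((t:ℝ) + ((t:ℝ)+1))/2 = (t:ℝ) + 1/2 by ring] at this
      exact this
    have hEinv : st n ((t:ℝ) + 1/2) - unitEff = (Real.cos (zet n))⁻¹ • (wv - unitEff) := by
      rw [hE, inv_smul_smul₀ hc.ne']
    refine ⟨Real.cos (((q:ℝ) - (p:ℝ)) * zet n) / Real.cos (zet n), wv, wv', t,
      hmem, hmem', hsum, ?_, ?_⟩
    · have hmid := st_mid n (p:ℝ) (q:ℝ)
      rw [show ((p:ℝ) + (q:ℝ))/2 = (t:ℝ) + 1/2 by rw [htR]; ring] at hmid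
      rw [hmid, hEinv, smul_smul, div_eq_mul_inv]
    · have e1 : (2*((p:ℝ) - (t:ℝ)) - 1) * zet n
          = -((((q:ℝ) - (p:ℝ))) * zet n) := by rw [htR]; ring
      have e2 : (2*((q:ℝ) - (t:ℝ)) - 1) * zet n
          = (((q:ℝ) - (p:ℝ))) * zet n := by rw [htR]; ring
      rw [e1, e2, Real.cos_neg, abs_div, abs_of_pos hc]
      have heq : 2 * Real.cos (zet n) * (|Real.cos (((q:ℝ) - (p:ℝ)) * zet n)| / Real.cos (zet n))
          = 2 * |Real.cos (((q:ℝ) - (p:ℝ)) * zet n)| := by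
        field_simp
      rw [heq]
      linarith [abs_nonneg (Real.cos (((q:ℝ) - (p:ℝ)) * zet n))]

end PolyAux

set_option maxHeartbeats 2000000 in
open PolyAux in
/-- **Theorem 3 (paper).** In an even-sided regular polygon theory, the sum of the `l∞`
distances of the marginals of an approximate joint measurement from two ideal
measurements is bounded below by the sum of the localization errors on some state. -/
theorem polygon_preparation_implies_measurement_lInfty
    (n : ℕ) (hn : 4 ≤ n) (heven : Even n) (i j : ℕ) (hi : i < n) (hj : j < n)
    (F G : Fin 2 → EuclideanSpace ℝ (Fin 3))
    (hF : F = ![polyEffect n i, unitEff - polyEffect n i])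
    (hG : G = ![polyEffect n j, unitEff - polyEffect n j])
    {m : Fin 2 × Fin 2 → EuclideanSpace ℝ (Fin 3)}
    (hM : IsMeasurement (polyΩ n) unitEff m) :
    ∃ ω ∈ polyΩ n,
      locError F ω + locError G ω ≤
        dInfty (polyΩ n) (margF m) F + dInfty (polyΩ n) (margG m) G := by
  classical
  obtain ⟨hEff, hSum⟩ := hM
  have hc : 0 < Real.cos (zet n) := cos_zet_pos hn
  set z : ℝ := zet n with hz
  set c : ℝ := Real.cos z with hcdef
  have hc1 : c ≤ 1 := Real.cos_le_one z
  have hchalf : 1/2 ≤ c := by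
    have h1 : z ≤ Real.pi / 4 := by
      rw [hz]
      unfold zet
      have h4 : (4:ℝ) ≤ n := by exact_mod_cast hn
      exact div_le_div_of_nonneg_left Real.pi_pos.le (by linarith) h4
    have h0 : 0 ≤ z := by
      rw [hz]; unfold zet; positivity
    have h2 : Real.cos (Real.pi/4) ≤ Real.cos z := by
      apply Real.cos_le_cos_of_nonneg_of_le_pi h0 _ h1
      linarith [Real.pi_le_four, Real.pi_pos]
    rw [Real.cos_pi_div_four] at h2
    have h3 : (1:ℝ) ≤ Real.sqrt 2 := by
      rw [show (1:ℝ) = Real.sqrt 1 by simp]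
      exact Real.sqrt_le_sqrt (by norm_num)
    rw [hcdef]; linarith
  set I : ℝ := (i:ℝ) with hI
  set J : ℝ := (j:ℝ) with hJ
  set f : EuclideanSpace ℝ (Fin 3) := polyEffect n i with hfdef
  set g : EuclideanSpace ℝ (Fin 3) := polyEffect n j with hgdef
  have hf0 : F 0 = f := by rw [hF]; rfl
  have hf1 : F 1 = unitEff - f := by rw [hF]; rfl
  have hg0 : G 0 = g := by rw [hG]; rfl
  have hg1 : G 1 = unitEff - g := by rw [hG]; rfl
  -- unit values on states
  have huω : ∀ ω ∈ polyΩ n, ⟪unitEff, ω⟫ = 1 := by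
    intro ω hω
    have := hull_bound unitEff 1 1 (fun k _ => by rw [inner_unit_st]; exact ⟨le_refl _, le_refl _⟩) ω hω
    linarith [this.1, this.2]
  -- f values formula
  have hfval : ∀ t : ℝ, ⟪f, st n t⟫ = 1/2 + Real.cos ((2*(I - t) - 1) * z) / (2*c) := by
    intro t
    rw [hfdef, polyEffect_eq]
    exact inner_ef_st hn I t
  have hgval : ∀ t : ℝ, ⟪g, st n t⟫ = 1/2 + Real.cos ((2*(J - t) - 1) * z) / (2*c) := by
    intro t
    rw [hgdef, polyEffect_eq]
    exact inner_ef_st hn J t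
  -- coarse bounds for f, g on the state space
  have hcoarse : ∀ (s : ℝ), ∀ ω ∈ polyΩ n, -1 ≤ ⟪ef n s, ω⟫ ∧ ⟪ef n s, ω⟫ ≤ 2 := by
    intro s
    apply hull_bound
    intro k _
    rw [inner_ef_st hn s k]
    have hb := Real.abs_cos_le_one ((2*(s - (k:ℝ)) - 1) * z)
    have h2c : 1/2 * (2*c) ≤ 1 * (2*c) := by nlinarith
    have habs : |Real.cos ((2*(s - (k:ℝ)) - 1) * z) / (2*c)| ≤ 1 := by
      rw [abs_div, abs_of_pos (by linarith : (0:ℝ) < 2*c)]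
      rw [div_le_one (by linarith : (0:ℝ) < 2*c)]
      nlinarith
    have := abs_le.mp habs
    constructor <;> linarith [this.1, this.2]
  have hfb : ∀ ω ∈ polyΩ n, -1 ≤ ⟪f, ω⟫ ∧ ⟪f, ω⟫ ≤ 2 := by
    intro ω hω
    rw [hfdef, polyEffect_eq]
    exact hcoarse I ω hω
  have hgb : ∀ ω ∈ polyΩ n, -1 ≤ ⟪g, ω⟫ ∧ ⟪g, ω⟫ ≤ 2 := by
    intro ω hω
    rw [hgdef, polyEffect_eq]
    exact hcoarse J ω hω
  -- marginals
  have hmargF : ∀ a : Fin 2, margF m a = m (a, 0) + m (a, 1) := by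
    intro a; simp [margF, Fin.sum_univ_two]
  have hmargG : ∀ b : Fin 2, margG m b = m (0, b) + m (1, b) := by
    intro b; simp [margG, Fin.sum_univ_two]
  have hmbound : ∀ p : Fin 2 × Fin 2, ∀ ω ∈ polyΩ n, 0 ≤ ⟪m p, ω⟫ ∧ ⟪m p, ω⟫ ≤ 1 :=
    fun p ω hω => (hEff p).2 ω hω
  -- bddAbove for the dInfty sets
  have hbddF : BddAbove {d : ℝ | ∃ ω ∈ polyΩ n, ∃ a : Fin 2, d = |⟪margF m a, ω⟫ - ⟪F a, ω⟫|} := by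
    refine ⟨4, ?_⟩
    rintro d ⟨ω, hω, a, rfl⟩
    have hm0 := hmbound (a, 0) ω hω
    have hm1 := hmbound (a, 1) ω hω
    have hmg : 0 ≤ ⟪margF m a, ω⟫ ∧ ⟪margF m a, ω⟫ ≤ 2 := by
      rw [hmargF, inner_add_left]
      constructor <;> linarith [hm0.1, hm0.2, hm1.1, hm1.2]
    have hFb : -1 ≤ ⟪F a, ω⟫ ∧ ⟪F a, ω⟫ ≤ 2 := by
      rcases (by omega : a = 0 ∨ a = 1) with rfl | rfl
      · rw [hf0]; exact hfb ω hω
      · rw [hf1, inner_sub_left, huω ω hω]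
        have := hfb ω hω
        constructor <;> linarith [this.1, this.2]
    apply abs_le.mpr
    constructor <;> linarith [hmg.1, hmg.2, hFb.1, hFb.2]
  have hbddG : BddAbove {d : ℝ | ∃ ω ∈ polyΩ n, ∃ a : Fin 2, d = |⟪margG m a, ω⟫ - ⟪G a, ω⟫|} := by
    refine ⟨4, ?_⟩
    rintro d ⟨ω, hω, a, rfl⟩
    have hm0 := hmbound (0, a) ω hω
    have hm1 := hmbound (1, a) ω hω
    have hmg : 0 ≤ ⟪margG m a, ω⟫ ∧ ⟪margG m a, ω⟫ ≤ 2 := by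
      rw [hmargG, inner_add_left]
      constructor <;> linarith [hm0.1, hm0.2, hm1.1, hm1.2]
    have hGb : -1 ≤ ⟪G a, ω⟫ ∧ ⟪G a, ω⟫ ≤ 2 := by
      rcases (by omega : a = 0 ∨ a = 1) with rfl | rfl
      · rw [hg0]; exact hgb ω hω
      · rw [hg1, inner_sub_left, huω ω hω]
        have := hgb ω hω
        constructor <;> linarith [this.1, this.2]
    apply abs_le.mpr
    constructor <;> linarith [hmg.1, hmg.2, hGb.1, hGb.2]
  set dF : ℝ := dInfty (polyΩ n) (margF m) F with hdFdef
  set dG : ℝ := dInfty (polyΩ n) (margG m) G with hdGdef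
  have hdF : ∀ ω ∈ polyΩ n, ∀ a : Fin 2,
      ⟪margF m a, ω⟫ - ⟪F a, ω⟫ ≤ dF ∧ ⟪F a, ω⟫ - ⟪margF m a, ω⟫ ≤ dF := by
    intro ω hω a
    have hmem : |⟪margF m a, ω⟫ - ⟪F a, ω⟫| ∈
        {d : ℝ | ∃ ω ∈ polyΩ n, ∃ a : Fin 2, d = |⟪margF m a, ω⟫ - ⟪F a, ω⟫|} :=
      ⟨ω, hω, a, rfl⟩
    have habs := le_csSup hbddF hmem
    rw [hdFdef, dInfty]
    constructor
    · linarith [le_abs_self (⟪margF m a, ω⟫ - ⟪F a, ω⟫)]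
    · linarith [neg_abs_le (⟪margF m a, ω⟫ - ⟪F a, ω⟫)]
  have hdG : ∀ ω ∈ polyΩ n, ∀ a : Fin 2,
      ⟪margG m a, ω⟫ - ⟪G a, ω⟫ ≤ dG ∧ ⟪G a, ω⟫ - ⟪margG m a, ω⟫ ≤ dG := by
    intro ω hω a
    have hmem : |⟪margG m a, ω⟫ - ⟪G a, ω⟫| ∈
        {d : ℝ | ∃ ω ∈ polyΩ n, ∃ a : Fin 2, d = |⟪margG m a, ω⟫ - ⟪G a, ω⟫|} :=
      ⟨ω, hω, a, rfl⟩
    have habs := le_csSup hbddG hmem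
    rw [hdGdef, dInfty]
    constructor
    · linarith [le_abs_self (⟪margG m a, ω⟫ - ⟪G a, ω⟫)]
    · linarith [neg_abs_le (⟪margG m a, ω⟫ - ⟪G a, ω⟫)]
  -- value of f at its own vertex
  have hfi : ⟪f, st n I⟫ = 1 := by
    rw [hfval I, show (2*(I - I) - 1) * z = -(1*z) by ring, Real.cos_neg, one_mul, ← hcdef]
    field_simp
    ring
  have hgj : ⟪g, st n J⟫ = 1 := by
    rw [hgval J, show (2*(J - J) - 1) * z = -(1*z) by ring, Real.cos_neg, one_mul, ← hcdef]
    field_simp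
    ring
  have hfu : ⟪f, unitEff⟫ = 1/2 := by rw [hfdef, polyEffect_eq]; exact inner_ef_unit I
  have hgu : ⟪g, unitEff⟫ = 1/2 := by rw [hgdef, polyEffect_eq]; exact inner_ef_unit J
  -- key dInfty inequalities
  have hFkey : 1/2 - ⟪margF m 0, st n I⟫ + ⟪margF m 0, unitEff⟫ ≤ dF := by
    have h1 := (hdF (st n I) (st_mem hn i) 0).2
    have h2 := (hdF (st n ((i + n/2 : ℕ):ℝ)) (st_mem hn (i + n/2)) 0).1
    have hanti : st n ((i + n/2 : ℕ):ℝ) = (2:ℝ) • unitEff - st n I :=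
      st_nat_antipode hn heven i
    rw [hanti] at h2
    rw [hf0] at h1 h2
    rw [inner_sub_right, inner_sub_right, real_inner_smul_right, real_inner_smul_right] at h2
    linarith [h1, h2, hfi, hfu]
  have hGkey : 1/2 - ⟪margG m 0, st n J⟫ + ⟪margG m 0, unitEff⟫ ≤ dG := by
    have h1 := (hdG (st n J) (st_mem hn j) 0).2
    have h2 := (hdG (st n ((j + n/2 : ℕ):ℝ)) (st_mem hn (j + n/2)) 0).1
    have hanti : st n ((j + n/2 : ℕ):ℝ) = (2:ℝ) • unitEff - st n J :=
      st_nat_antipode hn heven j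
    rw [hanti] at h2
    rw [hg0] at h1 h2
    rw [inner_sub_right, inner_sub_right, real_inner_smul_right, real_inner_smul_right] at h2
    linarith [h1, h2, hgj, hgu]
  -- decompositions
  obtain ⟨lamY, wy, wy', ty, hwy, hwy', hsy, hYeq0, hYpay0⟩ := decomp hn heven i j
  obtain ⟨lamZ, wz, wz', tz, hwz, hwz', hsz, hZeq0, hZpay0⟩ := decomp hn heven i (j + n/2)
  have hYeq : (2:ℝ)⁻¹ • (st n I + st n J) - unitEff = lamY • (wy - unitEff) := hYeq0
  have hYpay : 2*c*|lamY| ≤ |Real.cos ((2*(I - (ty:ℝ)) - 1) * z)|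
      + |Real.cos ((2*(J - (ty:ℝ)) - 1) * z)| := hYpay0
  have hZeq : (2:ℝ)⁻¹ • (st n I - st n J) = lamZ • (wz - unitEff) := by
    have hanti : st n ((j + n/2 : ℕ):ℝ) = (2:ℝ) • unitEff - st n J :=
      st_nat_antipode hn heven j
    rw [hanti] at hZeq0
    have hmod : (2:ℝ)⁻¹ • (st n I - st n J)
        = (2:ℝ)⁻¹ • (st n I + ((2:ℝ) • unitEff - st n J)) - unitEff := by module
    rw [hmod]
    exact hZeq0
  have hnz : (n:ℝ) * z = Real.pi := n_zet hn
  have hZpay : 2*c*|lamZ| ≤ |Real.cos ((2*(I - (tz:ℝ)) - 1) * z)|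
      + |Real.cos ((2*(J - (tz:ℝ)) - 1) * z)| := by
    have hcast : ((j + n/2 : ℕ):ℝ) = J + (n:ℝ)/2 := by
      push_cast [half_cast heven]; ring
    have h0 : 2*c*|lamZ| ≤ |Real.cos ((2*(I - (tz:ℝ)) - 1) * z)|
        + |Real.cos ((2*(((j + n/2 : ℕ):ℝ)) - 2*(tz:ℝ) - 1) * z)| := by
      have := hZpay0
      have harg : (2*(((j + n/2 : ℕ):ℝ) - (tz:ℝ)) - 1) * zet n
          = (2*(((j + n/2 : ℕ):ℝ)) - 2*(tz:ℝ) - 1) * zet n := by ring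
      rw [harg] at this
      exact this
    have harg2 : (2*(((j + n/2 : ℕ):ℝ)) - 2*(tz:ℝ) - 1) * z
        = (2*(J - (tz:ℝ)) - 1) * z + Real.pi := by
      rw [hcast]
      linear_combination hnz
    rw [harg2, Real.cos_add_pi, abs_neg] at h0
    exact h0
  set K : ℝ := max |lamY| |lamZ| with hK
  -- the measurement sums
  have hsum4 : m (0,0) + m (0,1) + (m (1,0) + m (1,1)) = unitEff := by
    rw [← hSum, Fintype.sum_prod_type, Fin.sum_univ_two, Fin.sum_univ_two, Fin.sum_univ_two]
  have hsumu : ⟪m (0,0), unitEff⟫ + ⟪m (0,1), unitEff⟫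
      + (⟪m (1,0), unitEff⟫ + ⟪m (1,1), unitEff⟫) = 1 := by
    have h := congrArg (fun v : EuclideanSpace ℝ (Fin 3) => (⟪v, unitEff⟫ : ℝ)) hsum4
    simp only [inner_add_left] at h
    rw [inner_unit_unit] at h
    linarith [h]
  have hSY : ⟪m (0,0), lamY • (wy - unitEff)⟫ + ⟪m (0,1), lamY • (wy - unitEff)⟫
      + (⟪m (1,0), lamY • (wy - unitEff)⟫ + ⟪m (1,1), lamY • (wy - unitEff)⟫) = 0 := by
    have h := congrArg (fun v : EuclideanSpace ℝ (Fin 3) =>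
      (⟪v, lamY • (wy - unitEff)⟫ : ℝ)) hsum4
    simp only [inner_add_left] at h
    have h2 : ⟪unitEff, lamY • (wy - unitEff)⟫ = (0:ℝ) := by
      rw [real_inner_smul_right, inner_sub_right, inner_unit_unit, huω wy hwy]
      ring
    linarith [h, h2]
  have hYb : ∀ p : Fin 2 × Fin 2, ∀ lam : ℝ, |lam| ≤ K →
      ⟪m p, lam • (wy - unitEff)⟫ ≤ K * ⟪m p, unitEff⟫ := fun p lam hl =>
    pair_bound (hmbound p wy hwy).1 ((hmbound p wy' hwy').1) hsy lam K hl
  have hZb : ∀ p : Fin 2 × Fin 2, ∀ lam : ℝ, |lam| ≤ K →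
      ⟪m p, lam • (wz - unitEff)⟫ ≤ K * ⟪m p, unitEff⟫ := fun p lam hl =>
    pair_bound (hmbound p wz hwz).1 ((hmbound p wz' hwz').1) hsz lam K hl
  have claim2 : (⟪margF m 0, st n I⟫ - ⟪margF m 0, unitEff⟫)
      + (⟪margG m 0, st n J⟫ - ⟪margG m 0, unitEff⟫) ≤ K := by
    have eA : ∀ e : EuclideanSpace ℝ (Fin 3),
        ⟪e, st n I⟫ - ⟪e, unitEff⟫
          = ⟪e, lamY • (wy - unitEff)⟫ + ⟪e, lamZ • (wz - unitEff)⟫ := by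
      intro e
      rw [← hYeq, ← hZeq, ← inner_add_right,
        show ((2:ℝ)⁻¹ • (st n I + st n J) - unitEff) + (2:ℝ)⁻¹ • (st n I - st n J)
          = st n I - unitEff by module, inner_sub_right]
    have eB : ∀ e : EuclideanSpace ℝ (Fin 3),
        ⟪e, st n J⟫ - ⟪e, unitEff⟫
          = ⟪e, lamY • (wy - unitEff)⟫ - ⟪e, lamZ • (wz - unitEff)⟫ := by
      intro e
      rw [← hYeq, ← hZeq, ← inner_sub_right, ← inner_sub_right,
        show ((2:ℝ)⁻¹ • (st n I + st n J) - unitEff) - (2:ℝ)⁻¹ • (st n I - st n J)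
          = st n J - unitEff by module]
    rw [hmargF 0, hmargG 0, inner_add_left, inner_add_left, inner_add_left, inner_add_left]
    have e00A := eA (m (0,0))
    have e01A := eA (m (0,1))
    have e00B := eB (m (0,0))
    have e10B := eB (m (1,0))
    have b00 := hYb (0,0) lamY (le_max_left _ _)
    have b11 := hYb (1,1) (-lamY) (by rw [abs_neg]; exact le_max_left _ _)
    have b01 := hZb (0,1) lamZ (le_max_right _ _)
    have b10 := hZb (1,0) (-lamZ) (by rw [abs_neg]; exact le_max_right _ _)
    have hnegY : ⟪m (1,1), (-lamY) • (wy - unitEff)⟫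
        = -⟪m (1,1), lamY • (wy - unitEff)⟫ := by
      rw [real_inner_smul_right, real_inner_smul_right]; ring
    have hnegZ : ⟪m (1,0), (-lamZ) • (wz - unitEff)⟫
        = -⟪m (1,0), lamZ • (wz - unitEff)⟫ := by
      rw [real_inner_smul_right, real_inner_smul_right]; ring
    rw [hnegY] at b11
    rw [hnegZ] at b10
    have hsumuK : K * ⟪m (0,0), unitEff⟫ + K * ⟪m (0,1), unitEff⟫
        + (K * ⟪m (1,0), unitEff⟫ + K * ⟪m (1,1), unitEff⟫) = K := by
      linear_combination K * hsumu
    linarith [hSY, hsumuK, b00, b11, b01, b10, e00A, e01A, e00B, e10B]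
  have hmain : 1 - K ≤ dF + dG := by linarith [hFkey, hGkey, claim2]
  -- final assembly
  have final : ∀ t : ℕ, 2*c*K ≤ |Real.cos ((2*(I - (t:ℝ)) - 1) * z)|
        + |Real.cos ((2*(J - (t:ℝ)) - 1) * z)| →
      ∃ ω ∈ polyΩ n, locError F ω + locError G ω ≤
        dInfty (polyΩ n) (margF m) F + dInfty (polyΩ n) (margG m) G := by
    intro t hpay
    refine ⟨st n (t:ℝ), st_mem hn t, ?_⟩
    have hp0 : ⟪F 0, st n (t:ℝ)⟫ = 1/2 + Real.cos ((2*(I - (t:ℝ)) - 1) * z) / (2*c) := by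
      rw [hf0]; exact hfval t
    have hp1 : ⟪F 1, st n (t:ℝ)⟫ = 1/2 - Real.cos ((2*(I - (t:ℝ)) - 1) * z) / (2*c) := by
      rw [hf1, inner_sub_left, huω _ (st_mem hn t), hfval t]; ring
    have hq0 : ⟪G 0, st n (t:ℝ)⟫ = 1/2 + Real.cos ((2*(J - (t:ℝ)) - 1) * z) / (2*c) := by
      rw [hg0]; exact hgval t
    have hq1 : ⟪G 1, st n (t:ℝ)⟫ = 1/2 - Real.cos ((2*(J - (t:ℝ)) - 1) * z) / (2*c) := by
      rw [hg1, inner_sub_left, huω _ (st_mem hn t), hgval t]; ring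
    have hlf0 : locError F (st n (t:ℝ)) ≤ 1 - ⟪F 0, st n (t:ℝ)⟫ := by
      have h := Finset.le_sup' (fun a => (⟪F a, st n (t:ℝ)⟫ : ℝ)) (Finset.mem_univ (0 : Fin 2))
      simp only [locError]
      linarith [h]
    have hlf1 : locError F (st n (t:ℝ)) ≤ 1 - ⟪F 1, st n (t:ℝ)⟫ := by
      have h := Finset.le_sup' (fun a => (⟪F a, st n (t:ℝ)⟫ : ℝ)) (Finset.mem_univ (1 : Fin 2))
      simp only [locError]
      linarith [h]
    have hlg0 : locError G (st n (t:ℝ)) ≤ 1 - ⟪G 0, st n (t:ℝ)⟫ := by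
      have h := Finset.le_sup' (fun a => (⟪G a, st n (t:ℝ)⟫ : ℝ)) (Finset.mem_univ (0 : Fin 2))
      simp only [locError]
      linarith [h]
    have hlg1 : locError G (st n (t:ℝ)) ≤ 1 - ⟪G 1, st n (t:ℝ)⟫ := by
      have h := Finset.le_sup' (fun a => (⟪G a, st n (t:ℝ)⟫ : ℝ)) (Finset.mem_univ (1 : Fin 2))
      simp only [locError]
      linarith [h]
    have hLF : locError F (st n (t:ℝ)) ≤ 1/2 - |Real.cos ((2*(I - (t:ℝ)) - 1) * z)| / (2*c) := by
      rcases abs_cases (Real.cos ((2*(I - (t:ℝ)) - 1) * z)) with ⟨he, _⟩ | ⟨he, _⟩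
      · rw [he]; linarith [hlf0, hp0]
      · rw [he]
        have hr : (-(Real.cos ((2*(I - (t:ℝ)) - 1) * z)))/(2*c)
            = -(Real.cos ((2*(I - (t:ℝ)) - 1) * z)/(2*c)) := by ring
        rw [hr]
        linarith [hlf1, hp1]
    have hLG : locError G (st n (t:ℝ)) ≤ 1/2 - |Real.cos ((2*(J - (t:ℝ)) - 1) * z)| / (2*c) := by
      rcases abs_cases (Real.cos ((2*(J - (t:ℝ)) - 1) * z)) with ⟨he, _⟩ | ⟨he, _⟩
      · rw [he]; linarith [hlg0, hq0]
      · rw [he]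
        have hr : (-(Real.cos ((2*(J - (t:ℝ)) - 1) * z)))/(2*c)
            = -(Real.cos ((2*(J - (t:ℝ)) - 1) * z)/(2*c)) := by ring
        rw [hr]
        linarith [hlg1, hq1]
    have hdiv : K ≤ (|Real.cos ((2*(I - (t:ℝ)) - 1) * z)|
        + |Real.cos ((2*(J - (t:ℝ)) - 1) * z)|) / (2*c) := by
      rw [le_div_iff₀ (by linarith : (0:ℝ) < 2*c)]
      linarith [hpay]
    have hsplit : (|Real.cos ((2*(I - (t:ℝ)) - 1) * z)|
        + |Real.cos ((2*(J - (t:ℝ)) - 1) * z)|) / (2*c)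
        = |Real.cos ((2*(I - (t:ℝ)) - 1) * z)|/(2*c)
          + |Real.cos ((2*(J - (t:ℝ)) - 1) * z)|/(2*c) := add_div _ _ _
    rw [hsplit] at hdiv
    linarith [hLF, hLG, hdiv, hmain]
  rcases le_total |lamZ| |lamY| with hbr | hbr
  · refine final ty ?_
    rw [hK, max_eq_left hbr]
    exact hYpay
  · refine final tz ?_
    rw [hK, max_eq_right hbr]
    exact hZpay
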